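/- Let m, n ≥ 1, μ ∈ [0,1), λ > 0, step sizes η : ℕ → ℝ, a sequence of matrices G : ℕ → Matrix (Fin m) (Fin n) ℝ, a sequence O : ℕ → Matrix (Fin m) (Fin n) ℝ, and an initial matrix X₁. Define the Muon iterates by B₀ = 0 and, for t ≥ 1: B_t = μ·B_{t-1} + G_t and X_{t+1} = X_t − η_t·(O_t + λ·X_t). Define the stochastic Frank–Wolfe iterates by g₀ = 0, X'₁ = X₁ and, for t ≥ 1: g_t = μ·g_{t-1} + (1−μ)·G_t, u_t = −(1/λ)·O_t, X'_{t+1} = (1 − λ·η_t)·X'_t + λ·η_t·u_t. Then: (i) B_t = (1−μ)⁻¹·g_t for all t ≥ 0; (ii) X_t = X'_t for all t ≥ 1; (iii) if in addition for each t ≥ 1 the matrix O_t satisfies ‖O_t‖₂ ≤ 1 and ⟨O_t, B_t⟩_F = sup { ⟨A, B_t⟩_F : A ∈ Matrix (Fin m) (Fin n) ℝ, ‖A‖₂ ≤ 1 }, then ⟨u_t, g_t⟩_F = inf { ⟨U, g_t⟩_F : ‖U‖₂ ≤ 1/λ }. Hence Muon with weight decay is an instance of stochastic Frank–Wolfe over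 the spectral-norm ball of radius 1/λ with momentum parameters γ = 1−μ, β₁ = μ and step sizes λ·η_t. -/

import Mathlib

/-- The spectral norm of a real matrix: the operator norm of the linear map
`x ↦ A.mulVec x` between the corresponding Euclidean spaces. -/
noncomputable def spectralNorm' {m n : ℕ} (A : Matrix (Fin m) (Fin n) ℝ) : ℝ :=
  ‖LinearMap.toContinuousLinearMap (Matrix.toEuclideanLin A)‖

/-- The Frobenius inner product of two real matrices. -/
def frobInner {m n : ℕ} (A B : Matrix (Fin m) (Fin n) ℝ) : ℝ :=
  ∑ i : Fin m, ∑ j : Fin n, A i j * B i j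

lemma spectralNorm'_smul {m n : ℕ} (c : ℝ) (A : Matrix (Fin m) (Fin n) ℝ) :
    spectralNorm' (c • A) = |c| * spectralNorm' A := by
  unfold spectralNorm'
  rw [map_smul, map_smul]
  rw [norm_smul c (LinearMap.toContinuousLinearMap (Matrix.toEuclideanLin A)), Real.norm_eq_abs]

lemma frobInner_smul_right {m n : ℕ} (c : ℝ) (A B : Matrix (Fin m) (Fin n) ℝ) :
    frobInner A (c • B) = c * frobInner A B := by
  simp [frobInner, Finset.mul_sum]; ring_nf
  congr 1 <;> ext i <;> congr 1 <;> ext j <;> ring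

lemma frobInner_smul_left {m n : ℕ} (c : ℝ) (A B : Matrix (Fin m) (Fin n) ℝ) :
    frobInner (c • A) B = c * frobInner A B := by
  simp [frobInner, Finset.mul_sum, mul_assoc]

/-- Muon with weight decay is an instance of stochastic Frank–Wolfe over the
spectral-norm ball of radius `1/λ`. -/
theorem muon_is_stochastic_frank_wolfe
    (m n : ℕ) (hm : 1 ≤ m) (hn : 1 ≤ n)
    (μ : ℝ) (hμ : μ ∈ Set.Ico (0 : ℝ) 1) (lam : ℝ) (hlam : 0 < lam)
    (η : ℕ → ℝ)
    (G O : ℕ → Matrix (Fin m) (Fin n) ℝ) (X₁ : Matrix (Fin m) (Fin n) ℝ)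
    -- Muon iterates
    (B X : ℕ → Matrix (Fin m) (Fin n) ℝ)
    (hB0 : B 0 = 0) (hX1 : X 1 = X₁)
    (hB : ∀ t, 1 ≤ t → B t = μ • B (t - 1) + G t)
    (hX : ∀ t, 1 ≤ t → X (t + 1) = X t - η t • (O t + lam • X t))
    -- stochastic Frank–Wolfe iterates (γ = 1 - μ, β₁ = μ, step sizes λ·η_t)
    (g u X' : ℕ → Matrix (Fin m) (Fin n) ℝ)
    (hg0 : g 0 = 0) (hX'1 : X' 1 = X₁)
    (hg : ∀ t, 1 ≤ t → g t = μ • g (t - 1) + (1 - μ) • G t)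
    (hu : ∀ t, 1 ≤ t → u t = (-(1 / lam)) • O t)
    (hX' : ∀ t, 1 ≤ t →
      X' (t + 1) = (1 - lam * η t) • X' t + (lam * η t) • u t) :
    (∀ t : ℕ, B t = (1 - μ)⁻¹ • g t) ∧
    (∀ t, 1 ≤ t → X t = X' t) ∧
    (∀ t, 1 ≤ t →
      (spectralNorm' (O t) ≤ 1 ∧
        IsGreatest {s : ℝ | ∃ A : Matrix (Fin m) (Fin n) ℝ,
            spectralNorm' A ≤ 1 ∧ s = frobInner A (B t)} (frobInner (O t) (B t))) →
      IsLeast {s : ℝ | ∃ U : Matrix (Fin m) (Fin n) ℝ,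
          spectralNorm' U ≤ 1 / lam ∧ s = frobInner U (g t)} (frobInner (u t) (g t))) := by
  obtain ⟨hμ0, hμ1⟩ := hμ
  have hμne : (1 : ℝ) - μ ≠ 0 := by linarith
  have hμpos : (0 : ℝ) < 1 - μ := by linarith
  have hlamne : lam ≠ 0 := ne_of_gt hlam
  -- Part (i)
  have part1 : ∀ t : ℕ, B t = (1 - μ)⁻¹ • g t := by
    intro t
    induction t with
    | zero => simp [hB0, hg0]
    | succ t ih =>
      have h1 : B (t + 1) = μ • B t + G (t + 1) := by
        simpa using hB (t + 1) (Nat.le_add_left 1 t)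
      have h2 : g (t + 1) = μ • g t + (1 - μ) • G (t + 1) := by
        simpa using hg (t + 1) (Nat.le_add_left 1 t)
      rw [h1, h2, ih, smul_add, smul_smul, smul_smul, smul_smul,
        inv_mul_cancel₀ hμne, one_smul, mul_comm]
  -- Part (ii)
  have part2 : ∀ t, 1 ≤ t → X t = X' t := by
    intro t ht
    induction t, ht using Nat.le_induction with
    | base => rw [hX1, hX'1]
    | succ t ht ih =>
      rw [hX t ht, hX' t ht, hu t ht, ih]
      rw [smul_smul]
      have : lam * η t * -(1 / lam) = -η t := by field_simp
      rw [this]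
      match_scalars <;> ring
  refine ⟨part1, part2, ?_⟩
  -- Part (iii)
  intro t ht ⟨hO1, hOgr⟩
  have hgB : g t = (1 - μ) • B t := by
    rw [part1 t, smul_smul, mul_inv_cancel₀ hμne, one_smul]
  have hut := hu t ht
  constructor
  · refine ⟨u t, ?_, rfl⟩
    rw [hut, spectralNorm'_smul]
    have : |(-(1 / lam))| = 1 / lam := by
      rw [abs_neg, abs_of_pos (by positivity)]
    rw [this]
    calc 1 / lam * spectralNorm' (O t) ≤ 1 / lam * 1 := by
          apply mul_le_mul_of_nonneg_left hO1 (by positivity)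
      _ = 1 / lam := by ring
  · rintro s ⟨U, hU, rfl⟩
    have hA : spectralNorm' ((-lam) • U) ≤ 1 := by
      rw [spectralNorm'_smul, abs_neg, abs_of_pos hlam]
      calc lam * spectralNorm' U ≤ lam * (1 / lam) := by
            apply mul_le_mul_of_nonneg_left hU (le_of_lt hlam)
        _ = 1 := by field_simp
    have hupper := hOgr.2 ⟨(-lam) • U, hA, rfl⟩
    rw [frobInner_smul_left] at hupper
    rw [hut, hgB, frobInner_smul_left, frobInner_smul_right, frobInner_smul_right]
    have key : -(1 / lam) * frobInner (O t) (B t) ≤ frobInner U (B t) := by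
      have h2 := mul_le_mul_of_nonneg_left hupper (le_of_lt (one_div_pos.mpr hlam))
      have h3 : (1 / lam) * (-lam * frobInner U (B t)) = -frobInner U (B t) := by
        field_simp
      rw [h3] at h2
      linarith
    nlinarith [key, hμpos]
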